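/- Symmetry of positive eigenfunctions: let 1 < p, q < ∞ and suppose u is a solution of (⌊u''⌉^{p-1})'' = λ⌊u⌉^{q-1} on [0, t₀] with Navier boundary conditions, u > 0 on (0, t₀), and suppose such positive solutions for given λ are unique (unique up to positive scalar multiple when p = q). Then u(t) = u(t₀ - t) for all t ∈ [0, t₀]. -/

import Mathlib

/-- Signed power ⌊x⌉^r = |x|^r · sgn x. -/
noncomputable def spow (r x : ℝ) : ℝ := |x| ^ r * Real.sign x

/-- u solves (⌊u''⌉^{p-1})'' = λ⌊u⌉^{q-1} on [0,t₀] with Navier boundary conditions. -/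
def NavierSol (p q lam t₀ : ℝ) (u : ℝ → ℝ) : Prop :=
  ContDiff ℝ 2 u ∧ ContDiff ℝ 2 (fun t => spow (p - 1) (deriv (deriv u) t)) ∧
  (∀ t ∈ Set.Icc (0:ℝ) t₀,
    deriv (deriv fun s => spow (p - 1) (deriv (deriv u) s)) t = lam * spow (q - 1) (u t)) ∧
  u 0 = 0 ∧ u t₀ = 0 ∧ deriv (deriv u) 0 = 0 ∧ deriv (deriv u) t₀ = 0

lemma deriv_refl (f : ℝ → ℝ) (hf : Differentiable ℝ f) (t₀ : ℝ) :
    deriv (fun t => f (t₀ - t)) = fun t => -deriv f (t₀ - t) := by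
  funext t
  have h : HasDerivAt (fun t : ℝ => t₀ - t) (-1) t := (hasDerivAt_id t).const_sub t₀
  have h2 := ((hf (t₀ - t)).hasDerivAt.comp t h)
  simpa [Function.comp_def] using h2.deriv

lemma contDiff_refl_comp (f : ℝ → ℝ) {n : ℕ} (hf : ContDiff ℝ n f) (t₀ : ℝ) :
    ContDiff ℝ n (fun t => f (t₀ - t)) :=
  hf.comp (contDiff_const.sub contDiff_id)

lemma deriv2_refl (f : ℝ → ℝ) (hf : ContDiff ℝ 2 f) (t₀ : ℝ) :
    deriv (deriv (fun t => f (t₀ - t))) = fun t => deriv (deriv f) (t₀ - t) := by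
  have hf1 : Differentiable ℝ f := hf.differentiable (by norm_num)
  have hf' : ContDiff ℝ 1 (deriv f) := by
    exact (contDiff_succ_iff_deriv.mp (show ContDiff ℝ (1 + 1) f by exact_mod_cast hf)).2.2
  have hf'd : Differentiable ℝ (deriv f) := hf'.differentiable one_ne_zero
  rw [deriv_refl f hf1 t₀]
  funext t
  have : deriv (fun t => -(fun s => deriv f (t₀ - s)) t) t
      = -deriv (fun s => deriv f (t₀ - s)) t := deriv.neg
  simp only at this
  rw [this, deriv_refl (deriv f) hf'd t₀, neg_neg]

/-- a positive Navier solution, unique up to positive scalar multiples,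
is symmetric about t₀/2. -/
theorem stmt9 (p q lam t₀ : ℝ) (hp : 1 < p) (hq : 1 < q) (ht₀ : 0 < t₀) (hlam : 0 < lam)
    (u : ℝ → ℝ) (hu : NavierSol p q lam t₀ u)
    (hpos : ∀ t ∈ Set.Ioo (0:ℝ) t₀, 0 < u t)
    (huniq : ∀ v : ℝ → ℝ, NavierSol p q lam t₀ v →
      (∀ t ∈ Set.Ioo (0:ℝ) t₀, 0 < v t) →
      ∃ c : ℝ, 0 < c ∧ ∀ t ∈ Set.Icc (0:ℝ) t₀, v t = c * u t) :
    ∀ t ∈ Set.Icc (0:ℝ) t₀, u t = u (t₀ - t) := by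
  obtain ⟨hcd, hcd2, heq, h0, ht, h20, h2t⟩ := hu
  set v : ℝ → ℝ := fun t => u (t₀ - t) with hv
  have hvdd : deriv (deriv v) = fun t => deriv (deriv u) (t₀ - t) := deriv2_refl u hcd t₀
  set w : ℝ → ℝ := fun t => spow (p - 1) (deriv (deriv u) t) with hw
  have hsw : (fun t => spow (p - 1) (deriv (deriv v) t)) = fun t => w (t₀ - t) := by
    funext t; rw [hvdd]
  have hvNav : NavierSol p q lam t₀ v := by
    refine ⟨contDiff_refl_comp u hcd t₀, ?_, ?_, ?_, ?_, ?_, ?_⟩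
    · rw [hsw]; exact contDiff_refl_comp w hcd2 t₀
    · intro t htmem
      have hmem : t₀ - t ∈ Set.Icc (0:ℝ) t₀ := by
        constructor <;> [linarith [htmem.2]; linarith [htmem.1]]
      rw [hsw, deriv2_refl w hcd2 t₀]
      exact heq (t₀ - t) hmem
    · simpa [hv] using ht
    · simpa [hv] using h0
    · rw [hvdd]; simpa using h2t
    · rw [hvdd]; simpa using h20
  have hvpos : ∀ t ∈ Set.Ioo (0:ℝ) t₀, 0 < v t := by
    intro t htmem
    exact hpos (t₀ - t) ⟨by linarith [htmem.2], by linarith [htmem.1]⟩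
  obtain ⟨c, hc, hcr⟩ := huniq v hvNav hvpos
  have hhalf : t₀ / 2 ∈ Set.Ioo (0:ℝ) t₀ := ⟨by linarith, by linarith⟩
  have hupos := hpos _ hhalf
  have h1 : v (t₀ / 2) = c * u (t₀ / 2) := hcr _ ⟨by linarith, by linarith⟩
  have h2 : v (t₀ / 2) = u (t₀ / 2) := by
    show u (t₀ - t₀ / 2) = u (t₀ / 2); congr 1; ring
  have hc1 : c = 1 := by
    have := h2 ▸ h1
    nlinarith
  intro t htmem
  have := hcr t htmem
  rw [hc1, one_mul] at this
  exact this.symm
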